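/- arXiv:1602.08760 — 3 statements merged into one kernel-verified Lean document; each statement's English description precedes it below -/
import Mathlib

section
/- With the same hypotheses (P an inner product, Q non-degenerate symmetric, Q(u,v) = P(Su,v), S² = Id), a subspace E ⊆ V satisfies E = S(E) if and only if E^P = E^Q. -/
/-- With `P` an inner product, `Q` a non-degenerate symmetric bilinear form,
`Q(u,v) = P(Su,v)` and `S² = Id`: a subspace `E` satisfies `E = S(E)` if and only if
`E^P = E^Q`. -/
theorem stmt_6 {V : Type*} [AddCommGroup V] [Module ℝ V] [FiniteDimensional ℝ V]
    (P Q : LinearMap.BilinForm ℝ V)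
    (hPsymm : ∀ u v : V, P u v = P v u) (hPpos : ∀ v : V, v ≠ 0 → 0 < P v v)
    (hQsymm : ∀ u v : V, Q u v = Q v u)
    (hQnd : LinearMap.BilinForm.Nondegenerate Q)
    (S : V →ₗ[ℝ] V) (hS : ∀ u v : V, Q u v = P (S u) v) (hS2 : ∀ v : V, S (S v) = v)
    (E : Submodule ℝ V) :
    E = Submodule.map S E ↔
      LinearMap.BilinForm.orthogonal P E = LinearMap.BilinForm.orthogonal Q E := by
  have hPnd : P.Nondegenerate := by
    constructor
    all_goals intro v hv
    all_goals by_contra h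
    all_goals exact (hPpos v h).ne' (hv v)
  have hPrefl : P.IsRefl := fun u v h => by rw [hPsymm]; exact h
  have key : LinearMap.BilinForm.orthogonal Q E
      = LinearMap.BilinForm.orthogonal P (Submodule.map S E) := by
    ext v
    constructor
    · rintro h m ⟨n, hn, rfl⟩
      have := h n hn
      rwa [hS] at this
    · intro h n hn
      rw [hS]
      exact h (S n) ⟨n, hn, rfl⟩
  constructor
  · intro hE
    rw [key, ← hE]
  · intro h
    rw [key] at h
    have := congrArg (LinearMap.BilinForm.orthogonal P) h
    rwa [LinearMap.BilinForm.orthogonal_orthogonal hPnd hPrefl,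
      LinearMap.BilinForm.orthogonal_orthogonal hPnd hPrefl] at this
end

section
/- Let Q be a non-degenerate symmetric bilinear form on a finite-dimensional real vector space V, E ⊆ V any subspace, and E₀ := E ∩ E^Q. A linear map T : E → V/E satisfies Q(Tx, x) = 0 for all x ∈ E₀ if and only if there exists a lift T′ : V → V of T (i.e. T′|_E composed with the projection V → V/E equals T) with Q(T′x, x) = 0 for all x ∈ V, i.e. T′ ∈ so(Q). -/
open Submodule LinearMap.BilinForm LinearMap

/-- Lemma on antisymmetric extensions: for a non-degenerate symmetric bilinear form `Q`
on `V`, a subspace `E` with `E₀ = E ∩ E^Q`, and a linear map `T : E → V/E`, one has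
`Q(Tx, x) = 0` for all `x ∈ E₀` (a well-defined condition, expressed via arbitrary lifts)
if and only if `T` admits a lift `T' : V → V` in `so(Q)`. -/
theorem stmt_8 {V : Type*} [AddCommGroup V] [Module ℝ V] [FiniteDimensional ℝ V]
    (Q : LinearMap.BilinForm ℝ V)
    (hQsymm : ∀ u v : V, Q u v = Q v u)
    (hQnd : LinearMap.BilinForm.Nondegenerate Q)
    (E : Submodule ℝ V) (T : E →ₗ[ℝ] V ⧸ E) :
    (∀ (x : V) (hx : x ∈ E), x ∈ LinearMap.BilinForm.orthogonal Q E →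
        ∀ y : V, E.mkQ y = T ⟨x, hx⟩ → Q y x = 0) ↔
      ∃ T' : V →ₗ[ℝ] V, (∀ x : E, E.mkQ (T' x) = T x) ∧ ∀ v : V, Q (T' v) v = 0 := by
  have hrefl : Q.IsRefl := fun u v h => by rw [hQsymm]; exact h
  constructor
  · intro h
    -- choose a lift S of T
    obtain ⟨σ, hσ⟩ := E.mkQ.exists_rightInverse_of_surjective (Submodule.range_mkQ E)
    set S : E →ₗ[ℝ] V := σ.comp T with hSdef
    have hSlift : ∀ x : E, E.mkQ (S x) = T x := fun x => by
      have := LinearMap.congr_fun hσ (T x)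
      simpa [hSdef] using this
    set O : Submodule ℝ V := Q.orthogonal E with hOdef
    set E₀ : Submodule ℝ V := E ⊓ O with hE₀def
    obtain ⟨C, hC⟩ := Submodule.exists_isCompl E₀
    set F : Submodule ℝ V := C ⊓ E with hFdef
    set G : Submodule ℝ V := C ⊓ O with hGdef
    obtain ⟨H, hH⟩ := Submodule.exists_isCompl (E ⊔ G)
    have hE₀E : E₀ ≤ E := inf_le_left
    have hE₀O : E₀ ≤ O := inf_le_right
    have hsupF : E₀ ⊔ F = E := by
      rw [hFdef, ← sup_inf_assoc_of_le _ hE₀E, hC.codisjoint.eq_top, top_inf_eq]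
    have hsupG : E₀ ⊔ G = O := by
      rw [hGdef, ← sup_inf_assoc_of_le _ hE₀O, hC.codisjoint.eq_top, top_inf_eq]
    have hdisEG : Disjoint E G := by
      rw [disjoint_iff, hGdef, ← inf_assoc]
      rw [inf_comm E C]
      have : C ⊓ E ⊓ O ≤ C ⊓ E₀ := by
        rw [hE₀def]; exact le_inf (le_trans inf_le_left inf_le_left)
          (le_inf (le_trans inf_le_left inf_le_right) inf_le_right)
      refine le_bot_iff.mp (le_trans this ?_)
      rw [inf_comm]; exact hC.disjoint.le_bot
    have hdisOF : Disjoint O F := by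
      rw [disjoint_iff]
      have : O ⊓ F ≤ E₀ ⊓ C := by
        rw [hE₀def, hFdef]
        exact le_inf (le_inf (le_trans inf_le_right inf_le_right) inf_le_left)
          (le_trans inf_le_right inf_le_left)
      exact le_bot_iff.mp (le_trans this hC.disjoint.le_bot)
    have hdisE₀F : Disjoint E₀ F := by
      rw [disjoint_iff]
      have : E₀ ⊓ F ≤ E₀ ⊓ C := le_inf inf_le_left (le_trans inf_le_right inf_le_left)
      exact le_bot_iff.mp (le_trans this hC.disjoint.le_bot)
    -- IsCompl facts for the three projections
    have hPE : IsCompl E (G ⊔ H) := by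
      constructor
      · exact hdisEG.disjoint_sup_right_of_disjoint_sup_left hH.disjoint
      · rw [codisjoint_iff, ← sup_assoc, hH.codisjoint.eq_top]
    have hOF : O ⊔ F = E ⊔ G := by
      rw [← hsupF, ← hsupG, sup_right_comm]
    have hPO : IsCompl O (F ⊔ H) := by
      constructor
      · exact hdisOF.disjoint_sup_right_of_disjoint_sup_left (hOF ▸ hH.disjoint)
      · rw [codisjoint_iff, ← sup_assoc, hOF, hH.codisjoint.eq_top]
    have hP0 : IsCompl E₀ (F ⊔ (G ⊔ H)) := by
      constructor
      · exact hdisE₀F.disjoint_sup_right_of_disjoint_sup_left (hsupF ▸ hPE.disjoint)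
      · rw [codisjoint_iff, ← sup_assoc, hsupF, ← sup_assoc, hH.codisjoint.eq_top]
    -- projections
    set p : V →ₗ[ℝ] E := E.linearProjOfIsCompl (G ⊔ H) hPE with hpdef
    set sP : V →ₗ[ℝ] O := O.linearProjOfIsCompl (F ⊔ H) hPO with hsdef
    set p₀ : V →ₗ[ℝ] E₀ := E₀.linearProjOfIsCompl (F ⊔ (G ⊔ H)) hP0 with hp₀def
    set i : E₀ →ₗ[ℝ] E := Submodule.inclusion hE₀E with hidef
    -- key component facts
    have fact1 : ∀ x : E, p (x : V) = x := fun x =>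
      Submodule.linearProjOfIsCompl_apply_left hPE x
    have fact4 : ∀ w : O, sP (w : V) = w := fun w =>
      Submodule.linearProjOfIsCompl_apply_left hPO w
    have fact2 : ∀ w : O, p (w : V) = i (p₀ (w : V)) := by
      intro w
      obtain ⟨a, ha, b, hb, hab⟩ := Submodule.mem_sup.mp (show (w:V) ∈ E₀ ⊔ G from hsupG.symm ▸ w.2)
      have hpa : p a = ⟨a, hE₀E ha⟩ := Submodule.linearProjOfIsCompl_apply_left hPE ⟨a, hE₀E ha⟩
      have hpb : p b = 0 := Submodule.linearProjOfIsCompl_apply_right' hPE (le_sup_left (α := Submodule ℝ V) hb)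
      have hqa : p₀ a = ⟨a, ha⟩ := Submodule.linearProjOfIsCompl_apply_left hP0 ⟨a, ha⟩
      have hqb : p₀ b = 0 := Submodule.linearProjOfIsCompl_apply_right' hP0
        (le_sup_right (α := Submodule ℝ V) (le_sup_left (α := Submodule ℝ V) hb))
      have : (w : V) = a + b := hab.symm
      rw [this, map_add, map_add, hpa, hpb, hqa, hqb]
      ext
      simp [hidef]
    have fact3 : ∀ x : E, ((sP (x : V)) : V) = ((p₀ (x : V)) : V) := by
      intro x
      obtain ⟨a, ha, b, hb, hab⟩ := Submodule.mem_sup.mp (show (x:V) ∈ E₀ ⊔ F from hsupF.symm ▸ x.2)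
      have hsa : sP a = ⟨a, hE₀O ha⟩ := Submodule.linearProjOfIsCompl_apply_left hPO ⟨a, hE₀O ha⟩
      have hsb : sP b = 0 := Submodule.linearProjOfIsCompl_apply_right' hPO (le_sup_left (α := Submodule ℝ V) hb)
      have hqa : p₀ a = ⟨a, ha⟩ := Submodule.linearProjOfIsCompl_apply_left hP0 ⟨a, ha⟩
      have hqb : p₀ b = 0 := Submodule.linearProjOfIsCompl_apply_right' hP0
        (le_sup_left (α := Submodule ℝ V) hb)
      have : (x : V) = a + b := hab.symm
      rw [this, map_add, map_add, hsa, hsb, hqa, hqb]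
      simp
    -- the key vanishing from the hypothesis
    have hQ0 : ∀ v : V, Q (S (i (p₀ v))) ((p₀ v : V)) = 0 := by
      intro v
      refine h (p₀ v : V) (p₀ v).2.1 (p₀ v).2.2 _ ?_
      rw [hSlift]
      congr 1
    -- the bilinear form ω
    set ω : V →ₗ[ℝ] V →ₗ[ℝ] ℝ := LinearMap.mk₂ ℝ
        (fun v w => Q (S (p v)) ((sP w : V)) - Q (S (p w)) ((sP v : V))
          + Q (S (i (p₀ w))) ((p₀ v : V)))
        (by intro v v' w; simp [map_add]; ring)
        (by intro c v w; simp [map_smul]; ring)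
        (by intro v w w'; simp [map_add]; ring)
        (by intro c v w; simp [map_smul]; ring) with hωdef
    have hωapp : ∀ v w : V, ω v w = Q (S (p v)) ((sP w : V)) - Q (S (p w)) ((sP v : V))
          + Q (S (i (p₀ w))) ((p₀ v : V)) := fun v w => rfl
    set T' : V →ₗ[ℝ] V := ((Q.toDual hQnd).symm.toLinearMap).comp ω with hT'def
    have hQT' : ∀ v w : V, Q (T' v) w = ω v w := fun v w =>
      LinearMap.BilinForm.apply_toDual_symm_apply (B := Q) (hB := hQnd) (ω v) w
    refine ⟨T', ?_, ?_⟩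
    · intro x
      have key : ∀ n : V, n ∈ O → Q (T' (x : V)) n = Q (S x) n := by
        intro n hn
        rw [hQT', hωapp, fact1, fact2 ⟨n, hn⟩, fact3]
        have h4 : ((sP n : V)) = n := by rw [fact4 ⟨n, hn⟩]
        rw [h4]
        ring
      have hmem : T' (x : V) - S x ∈ E := by
        have hmem' : T' (x : V) - S x ∈ Q.orthogonal O := by
          refine (Q.mem_orthogonal_iff).mpr fun n hn => hrefl _ _ ?_
          rw [map_sub]
          simp [key n hn]
        rwa [hOdef, Q.orthogonal_orthogonal hQnd hrefl] at hmem'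
      rw [← hSlift x, Submodule.mkQ_apply, Submodule.mkQ_apply, Submodule.Quotient.eq]
      exact hmem
    · intro v
      rw [hQT', hωapp, hQ0 v]
      ring
  · rintro ⟨T', hlift, hso⟩ x hx hxorth y hy
    have hmem : y - T' x ∈ E := by
      rw [← Submodule.Quotient.eq]
      exact hy.trans (hlift ⟨x, hx⟩).symm
    have h1 : Q (y - T' x) x = 0 := hxorth _ hmem
    have h2 : Q (T' x) x = 0 := hso x
    have := map_sub Q y (T' x)
    calc Q y x = Q (y - T' x) x + Q (T' x) x := by
          rw [map_sub]; simp
      _ = 0 := by rw [h1, h2, add_zero]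
end

section
/- Let Q be a non-degenerate symmetric bilinear form on an n-dimensional real vector space V, E ⊆ V a k-dimensional subspace, E₀ := E ∩ E^Q, and r := dim E₀. Let π_E : so(Q) → Hom(E, V/E) be the map sending A to the composition E ↪ V → V → V/E of A with inclusion and projection. Then the image of π_E equals { T ∈ Hom(E, V/E) : Q(Tx, x) = 0 for all x ∈ E₀ } and has dimension k(n−k) − r(r+1)/2. -/
open Module

/-- The Lie algebra `so(Q)` as a submodule of endomorphisms. -/
def soQ {V : Type*} [AddCommGroup V] [Module ℝ V] (Q : LinearMap.BilinForm ℝ V) :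
    Submodule ℝ (V →ₗ[ℝ] V) where
  carrier := {A | ∀ v w : V, Q (A v) w + Q v (A w) = 0}
  add_mem' := by
    intro a b ha hb v w
    have h1 := ha v w
    have h2 := hb v w
    simp only [LinearMap.add_apply, map_add] at *
    linarith
  zero_mem' := by intro v w; simp
  smul_mem' := by
    intro c a ha v w
    have h := ha v w
    simp only [LinearMap.smul_apply, map_smul, smul_eq_mul]
    linear_combination c * h

/-- The natural projection `End(V) → Hom(E, V/E)`, `A ↦ mkQ ∘ A ∘ incl`. -/
def piE {V : Type*} [AddCommGroup V] [Module ℝ V] (E : Submodule ℝ V) :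
    (V →ₗ[ℝ] V) →ₗ[ℝ] (↥E →ₗ[ℝ] V ⧸ E) where
  toFun A := E.mkQ ∘ₗ A ∘ₗ E.subtype
  map_add' := by intro a b; ext x; simp
  map_smul' := by intro c a; ext x; simp

section Aux

variable {V : Type*} [AddCommGroup V] [Module ℝ V]

/-- The target set as a submodule of `Hom(E, V/E)`. -/
def Sset (Q : LinearMap.BilinForm ℝ V) (E : Submodule ℝ V) : Submodule ℝ (↥E →ₗ[ℝ] V ⧸ E) where
  carrier := {T | ∀ (x : V) (hx : x ∈ E), x ∈ LinearMap.BilinForm.orthogonal Q E →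
      ∀ y : V, E.mkQ y = T ⟨x, hx⟩ → Q y x = 0}
  add_mem' := by
    intro a b ha hb x hx hxO y hy
    obtain ⟨y₁, hy₁⟩ := E.mkQ_surjective (a ⟨x, hx⟩)
    have h1 := ha x hx hxO y₁ hy₁
    have h2 : E.mkQ (y - y₁) = b ⟨x, hx⟩ := by
      rw [map_sub, hy, hy₁]; simp
    have h3 := hb x hx hxO (y - y₁) h2
    simp only [map_sub, LinearMap.sub_apply] at h3
    linarith
  zero_mem' := by
    intro x hx hxO y hy
    simp only [LinearMap.zero_apply] at hy
    have hyE : y ∈ E := by rwa [← Submodule.Quotient.mk_eq_zero, ← Submodule.mkQ_apply]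
    exact LinearMap.BilinForm.mem_orthogonal_iff.mp hxO y hyE
  smul_mem' := by
    intro c a ha x hx hxO y hy
    rcases eq_or_ne c 0 with rfl | hc
    · simp only [zero_smul, LinearMap.zero_apply] at hy
      have hyE : y ∈ E := by rwa [← Submodule.Quotient.mk_eq_zero, ← Submodule.mkQ_apply]
      exact LinearMap.BilinForm.mem_orthogonal_iff.mp hxO y hyE
    · have h2 : E.mkQ (c⁻¹ • y) = a ⟨x, hx⟩ := by
        rw [map_smul, hy]
        simp only [LinearMap.smul_apply]
        rw [smul_smul, inv_mul_cancel₀ hc, one_smul]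
      have h3 := ha x hx hxO (c⁻¹ • y) h2
      simp only [map_smul, LinearMap.smul_apply, smul_eq_mul] at h3
      rcases mul_eq_zero.mp h3 with h | h
      · exact absurd h (inv_ne_zero hc)
      · exact h

theorem mem_Sset_iff {Q : LinearMap.BilinForm ℝ V} {E : Submodule ℝ V}
    (σ : V ⧸ E →ₗ[ℝ] V) (hσ : ∀ z, E.mkQ (σ z) = z) {T : ↥E →ₗ[ℝ] V ⧸ E} :
    T ∈ Sset Q E ↔ ∀ (x : V) (hx : x ∈ E), x ∈ LinearMap.BilinForm.orthogonal Q E →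
      Q (σ (T ⟨x, hx⟩)) x = 0 := by
  constructor
  · intro h x hx hxO
    exact h x hx hxO _ (hσ _)
  · intro h x hx hxO y hy
    have h1 : y - σ (T ⟨x, hx⟩) ∈ E := by
      rw [← Submodule.Quotient.mk_eq_zero, ← Submodule.mkQ_apply, map_sub, hσ, hy, sub_self]
    have h2 : Q (y - σ (T ⟨x, hx⟩)) x = 0 :=
      LinearMap.BilinForm.mem_orthogonal_iff.mp hxO _ h1
    have h3 := h x hx hxO
    simp only [map_sub, LinearMap.sub_apply] at h2
    linarith

theorem exists_compl_le {p q : Submodule ℝ V} (hpq : p ≤ q) :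
    ∃ f : Submodule ℝ V, f ≤ q ∧ p ⊓ f = ⊥ ∧ p ⊔ f = q := by
  obtain ⟨c, hc⟩ := Submodule.exists_isCompl (Submodule.comap q.subtype p)
  refine ⟨c.map q.subtype, Submodule.map_subtype_le q c, ?_, ?_⟩
  · rw [eq_bot_iff]
    intro v hv
    rw [Submodule.mem_inf] at hv
    obtain ⟨hvp, hvm⟩ := hv
    obtain ⟨u, hu, rfl⟩ := hvm
    have h1 : u ∈ Submodule.comap q.subtype p ⊓ c := ⟨hvp, hu⟩
    rw [hc.inf_eq_bot] at h1
    rw [Submodule.mem_bot] at h1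
    simp [h1]
  · have h2 : Submodule.map q.subtype (Submodule.comap q.subtype p ⊔ c) = q := by
      rw [hc.sup_eq_top, Submodule.map_top, Submodule.range_subtype]
    rw [Submodule.map_sup, Submodule.map_comap_subtype, inf_of_le_right hpq] at h2
    exact h2


theorem mem_soQ {Q : LinearMap.BilinForm ℝ V} {A : V →ₗ[ℝ] V} :
    A ∈ soQ Q ↔ ∀ v w : V, Q (A v) w + Q v (A w) = 0 := Iff.rfl

theorem piE_apply (E : Submodule ℝ V) (A : V →ₗ[ℝ] V) (x : ↥E) :
    piE E A x = E.mkQ (A x) := rfl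

theorem extension_aux [FiniteDimensional ℝ V] (Q : LinearMap.BilinForm ℝ V)
    (hQsymm : ∀ u v : V, Q u v = Q v u)
    (hQnd : LinearMap.BilinForm.Nondegenerate Q) (E : Submodule ℝ V)
    (σ : V ⧸ E →ₗ[ℝ] V) (hσ : ∀ z, E.mkQ (σ z) = z)
    (T : ↥E →ₗ[ℝ] V ⧸ E)
    (hT : ∀ (x : V) (hx : x ∈ E), x ∈ LinearMap.BilinForm.orthogonal Q E →
      Q (σ (T ⟨x, hx⟩)) x = 0)
    (P : V →ₗ[ℝ] ↥E) (Pq : V →ₗ[ℝ] ↥(LinearMap.BilinForm.orthogonal Q E))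
    (hP_id : ∀ x : ↥E, P (x : V) = x)
    (hPq_id : ∀ w : ↥(LinearMap.BilinForm.orthogonal Q E), Pq (w : V) = w)
    (hP_E₀ : ∀ w ∈ LinearMap.BilinForm.orthogonal Q E,
      ((P w : ↥E) : V) ∈ E ⊓ LinearMap.BilinForm.orthogonal Q E)
    (hPq_E₀ : ∀ x ∈ E,
      ((Pq x : ↥(LinearMap.BilinForm.orthogonal Q E)) : V) ∈ E ⊓ LinearMap.BilinForm.orthogonal Q E) :
    ∃ A ∈ soQ Q, piE E A = T := by
  have hrefl : Q.IsRefl := fun v w h => by rw [hQsymm]; exact h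
  set τ : V →ₗ[ℝ] V := σ ∘ₗ (T ∘ₗ P) with hτdef
  set qv : V →ₗ[ℝ] V := (LinearMap.BilinForm.orthogonal Q E).subtype ∘ₗ Pq with hqvdef
  set pv : V →ₗ[ℝ] V := E.subtype ∘ₗ P with hpvdef
  set ωb : LinearMap.BilinForm ℝ V :=
    (LinearMap.compl₂ Q qv) ∘ₗ τ - ((LinearMap.compl₂ Q qv) ∘ₗ τ).flip
      + ((LinearMap.compl₂ Q (pv ∘ₗ qv)) ∘ₗ (τ ∘ₗ qv)).flip with hωdef
  have hω : ∀ u v : V, ωb u v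
      = Q (τ u) (qv v) - Q (τ v) (qv u) + Q (τ (qv v)) (pv (qv u)) := by
    intro u v
    simp [hωdef, LinearMap.compl₂_apply, LinearMap.flip_apply, LinearMap.sub_apply,
      LinearMap.add_apply, LinearMap.comp_apply]
  have hτE : ∀ x : ↥E, τ (x : V) = σ (T x) := by
    intro x
    show σ (T (P (x : V))) = σ (T x)
    rw [hP_id x]
  have hkey : ∀ u : V, pv (qv u) ∈ E ⊓ LinearMap.BilinForm.orthogonal Q E :=
    fun u => hP_E₀ _ (Pq u).2
  have hτqv : ∀ u : V, τ (qv u) = σ (T ⟨pv (qv u), (hkey u).1⟩) := by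
    intro u
    show σ (T (P (qv u))) = _
    exact congrArg σ (congrArg T (Subtype.ext rfl))
  have halt : ∀ u : V, ωb u u = 0 := by
    intro u
    rw [hω, hτqv]
    have h3 := hT (pv (qv u)) (hkey u).1 (hkey u).2
    linarith
  set A : V →ₗ[ℝ] V := (LinearMap.BilinForm.toDual Q hQnd).symm.toLinearMap ∘ₗ ωb with hAdef
  have hQA : ∀ u w : V, Q (A u) w = ωb u w := by
    intro u w
    exact LinearMap.BilinForm.apply_toDual_symm_apply (hB := hQnd) (ωb u) w
  have hA : A ∈ soQ Q := by
    rw [mem_soQ]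
    intro v w
    have h1 := halt (v + w)
    have h2 := halt v
    have h3 := halt w
    simp only [map_add, LinearMap.add_apply] at h1
    rw [hQA, hQsymm v (A w), hQA]
    linarith
  refine ⟨A, hA, ?_⟩
  apply LinearMap.ext
  intro x
  rw [piE_apply]
  have key : ∀ w ∈ LinearMap.BilinForm.orthogonal Q E, Q (A (x : V) - σ (T x)) w = 0 := by
    intro w hw
    have e1 : qv w = w := by
      show ((Pq w : ↥(LinearMap.BilinForm.orthogonal Q E)) : V) = w
      exact congrArg Subtype.val (hPq_id ⟨w, hw⟩)
    have hx₀ : qv (x : V) ∈ E ⊓ LinearMap.BilinForm.orthogonal Q E := hPq_E₀ (x : V) x.2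
    have e2 : pv (qv (x : V)) = qv (x : V) := by
      show ((P (qv (x : V)) : ↥E) : V) = qv (x : V)
      exact congrArg Subtype.val (hP_id ⟨qv (x : V), hx₀.1⟩)
    simp only [map_sub, LinearMap.sub_apply]
    rw [hQA, hω, e1, e2, hτE x]
    ring
  have hdiff : A (x : V) - σ (T x) ∈ E := by
    have hmem : A (x : V) - σ (T x)
        ∈ LinearMap.BilinForm.orthogonal Q (LinearMap.BilinForm.orthogonal Q E) := by
      rw [LinearMap.BilinForm.mem_orthogonal_iff]
      intro n hn
      rw [hQsymm]
      exact key n hn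
    rwa [LinearMap.BilinForm.orthogonal_orthogonal hQnd hrefl E] at hmem
  have h9 : E.mkQ (A (x : V)) = E.mkQ (σ (T x)) := by
    rw [Submodule.mkQ_apply, Submodule.mkQ_apply]
    exact (Submodule.Quotient.eq E).mpr hdiff
  rw [h9, hσ (T x)]

theorem isCompl_aux {X O W F₁ : Submodule ℝ V}
    (hF₁q : F₁ ≤ O) (hF₁i : (X ⊓ O) ⊓ F₁ = ⊥) (hF₁s : (X ⊓ O) ⊔ F₁ = O)
    (hW : IsCompl (X ⊔ O) W) : IsCompl X (F₁ ⊔ W) := by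
  constructor
  · rw [Submodule.disjoint_def]
    intro v hvE hvFW
    obtain ⟨f, hf, w, hw, rfl⟩ := Submodule.mem_sup.mp hvFW
    have hwEO : w ∈ X ⊔ O := by
      have h : w = (f + w) - f := (add_sub_cancel_left f w).symm
      rw [h]
      exact sub_mem (Submodule.mem_sup_left hvE) (Submodule.mem_sup_right (hF₁q hf))
    have hw0 : w = 0 := Submodule.disjoint_def.mp hW.disjoint w hwEO hw
    subst hw0
    rw [add_zero] at hvE ⊢
    have h5 : f ∈ (X ⊓ O) ⊓ F₁ := ⟨⟨hvE, hF₁q hf⟩, hf⟩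
    rw [hF₁i, Submodule.mem_bot] at h5
    exact h5
  · rw [codisjoint_iff]
    have h1 : X ⊔ F₁ = X ⊔ O := by
      apply le_antisymm
      · exact sup_le le_sup_left (le_trans hF₁q le_sup_right)
      · refine sup_le le_sup_left ?_
        rw [← hF₁s]
        exact sup_le (le_trans inf_le_left le_sup_left) le_sup_right
    rw [← sup_assoc, h1, codisjoint_iff.mp hW.codisjoint]

-- Build projection data
theorem proj_data [FiniteDimensional ℝ V] (Q : LinearMap.BilinForm ℝ V) (E : Submodule ℝ V) :
    ∃ (P : V →ₗ[ℝ] ↥E) (Pq : V →ₗ[ℝ] ↥(LinearMap.BilinForm.orthogonal Q E)),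
      (∀ x : ↥E, P (x : V) = x) ∧
      (∀ w : ↥(LinearMap.BilinForm.orthogonal Q E), Pq (w : V) = w) ∧
      (∀ w ∈ LinearMap.BilinForm.orthogonal Q E,
        ((P w : ↥E) : V) ∈ E ⊓ LinearMap.BilinForm.orthogonal Q E) ∧
      (∀ x ∈ E, ((Pq x : ↥(LinearMap.BilinForm.orthogonal Q E)) : V)
        ∈ E ⊓ LinearMap.BilinForm.orthogonal Q E) := by
  set O := LinearMap.BilinForm.orthogonal Q E with hO
  obtain ⟨E₁, hE₁q, hE₁i, hE₁s⟩ := exists_compl_le (inf_le_left : E ⊓ O ≤ E)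
  obtain ⟨F₁, hF₁q, hF₁i, hF₁s⟩ := exists_compl_le (inf_le_right : E ⊓ O ≤ O)
  obtain ⟨W, hW⟩ := Submodule.exists_isCompl (E ⊔ O)
  have hcE : IsCompl E (F₁ ⊔ W) := isCompl_aux hF₁q hF₁i hF₁s hW
  have hcO : IsCompl O (E₁ ⊔ W) := by
    refine isCompl_aux hE₁q ?_ ?_ ?_
    · rw [inf_comm O E]; exact hE₁i
    · rw [inf_comm O E]; exact hE₁s
    · rw [sup_comm O E]; exact hW
  refine ⟨E.linearProjOfIsCompl _ hcE, O.linearProjOfIsCompl _ hcO,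
    fun x => Submodule.linearProjOfIsCompl_apply_left hcE x,
    fun w => Submodule.linearProjOfIsCompl_apply_left hcO w, ?_, ?_⟩
  · intro w hw
    rw [← hF₁s] at hw
    obtain ⟨a, ha, b, hb, rfl⟩ := Submodule.mem_sup.mp hw
    have h1 : E.linearProjOfIsCompl _ hcE a = ⟨a, ha.1⟩ :=
      Submodule.linearProjOfIsCompl_apply_left hcE ⟨a, ha.1⟩
    have h2 : E.linearProjOfIsCompl _ hcE b = 0 :=
      Submodule.projectionOnto_apply_of_mem_right hcE (Submodule.mem_sup_left hb)
    rw [map_add, h1, h2, add_zero]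
    exact ha
  · intro x hx
    rw [← hE₁s] at hx
    obtain ⟨a, ha, b, hb, rfl⟩ := Submodule.mem_sup.mp hx
    have h1 : O.linearProjOfIsCompl _ hcO a = ⟨a, ha.2⟩ :=
      Submodule.linearProjOfIsCompl_apply_left hcO ⟨a, ha.2⟩
    have h2 : O.linearProjOfIsCompl _ hcO b = 0 :=
      Submodule.projectionOnto_apply_of_mem_right hcO (Submodule.mem_sup_left hb)
    rw [map_add, h1, h2, add_zero]
    exact ha

noncomputable def psiMap (Q : LinearMap.BilinForm ℝ V) (E : Submodule ℝ V)
    (σ : V ⧸ E →ₗ[ℝ] V) {r : ℕ}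
    (e : Basis (Fin r) ℝ ↥(E ⊓ LinearMap.BilinForm.orthogonal Q E)) :
    (↥E →ₗ[ℝ] V ⧸ E) →ₗ[ℝ] ({p : Fin r × Fin r // p.1 ≤ p.2} → ℝ) where
  toFun T p := Q (σ (T (Submodule.inclusion inf_le_left (e p.1.1)))) (e p.1.2)
    + Q (σ (T (Submodule.inclusion inf_le_left (e p.1.2)))) (e p.1.1)
  map_add' := by
    intro a b
    funext p
    simp only [LinearMap.add_apply, map_add, Pi.add_apply]
    ring
  map_smul' := by
    intro c a
    funext p
    simp only [LinearMap.smul_apply, map_smul, Pi.smul_apply, smul_eq_mul, RingHom.id_apply]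
    ring

theorem psiMap_apply (Q : LinearMap.BilinForm ℝ V) (E : Submodule ℝ V)
    (σ : V ⧸ E →ₗ[ℝ] V) {r : ℕ}
    (e : Basis (Fin r) ℝ ↥(E ⊓ LinearMap.BilinForm.orthogonal Q E))
    (T : ↥E →ₗ[ℝ] V ⧸ E) (p : {p : Fin r × Fin r // p.1 ≤ p.2}) :
    psiMap Q E σ e T p = Q (σ (T (Submodule.inclusion inf_le_left (e p.1.1)))) (e p.1.2)
      + Q (σ (T (Submodule.inclusion inf_le_left (e p.1.2)))) (e p.1.1) := rfl

theorem card_pairs (r : ℕ) : Fintype.card {p : Fin r × Fin r // p.1 ≤ p.2} = r * (r + 1) / 2 := by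
  have h1 : Fintype.card {p : Fin r × Fin r // p.1 ≤ p.2} = Fintype.card (Sym2 (Fin r)) :=
    (Fintype.card_congr Sym2.sortEquiv).symm
  rw [h1, Sym2.card, Fintype.card_fin, Nat.choose_two_right, Nat.add_sub_cancel, Nat.mul_comm]


theorem ker_psiMap (Q : LinearMap.BilinForm ℝ V) (E : Submodule ℝ V)
    (σ : V ⧸ E →ₗ[ℝ] V) (hσ : ∀ z, E.mkQ (σ z) = z) {r : ℕ}
    (e : Basis (Fin r) ℝ ↥(E ⊓ LinearMap.BilinForm.orthogonal Q E)) :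
    LinearMap.ker (psiMap Q E σ e) = Sset Q E := by
  apply le_antisymm
  · intro T hT
    rw [LinearMap.mem_ker] at hT
    set C : ↥(E ⊓ LinearMap.BilinForm.orthogonal Q E) →ₗ[ℝ]
        ↥(E ⊓ LinearMap.BilinForm.orthogonal Q E) →ₗ[ℝ] ℝ :=
      LinearMap.compl₂ (Q ∘ₗ (σ ∘ₗ (T ∘ₗ Submodule.inclusion inf_le_left)))
        (E ⊓ LinearMap.BilinForm.orthogonal Q E).subtype with hC
    have hCapp : ∀ a b, C a b = Q (σ (T (Submodule.inclusion inf_le_left a))) (b : V) :=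
      fun a b => rfl
    have hBij : ∀ i j, C (e i) (e j) + C (e j) (e i) = 0 := by
      intro i j
      rcases le_total i j with h | h
      · exact congrFun hT ⟨(i, j), h⟩
      · have h2 := congrFun hT ⟨(j, i), h⟩
        rw [add_comm]
        exact h2
    have hD : (C + C.flip) = 0 := by
      refine e.ext fun i => e.ext fun j => ?_
      simpa using hBij i j
    have hB0 : ∀ a b, C a b + C b a = 0 := by
      intro a b
      have h := LinearMap.congr_fun (LinearMap.congr_fun hD a) b
      simpa using h
    rw [mem_Sset_iff σ hσ]
    intro x hx hxO
    have h := hB0 ⟨x, hx, hxO⟩ ⟨x, hx, hxO⟩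
    have hz : Q (σ (T (Submodule.inclusion inf_le_left
        (⟨x, hx, hxO⟩ : ↥(E ⊓ LinearMap.BilinForm.orthogonal Q E))))) x = 0 := by
      have := hCapp (⟨x, hx, hxO⟩ : ↥(E ⊓ LinearMap.BilinForm.orthogonal Q E))
        ⟨x, hx, hxO⟩
      rw [this] at h
      linarith
    have hi : Submodule.inclusion (inf_le_left : E ⊓ LinearMap.BilinForm.orthogonal Q E ≤ E)
        (⟨x, hx, hxO⟩ : ↥(E ⊓ LinearMap.BilinForm.orthogonal Q E)) = ⟨x, hx⟩ :=
      Subtype.ext rfl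
    rwa [hi] at hz
  · intro T hT
    rw [mem_Sset_iff σ hσ] at hT
    have hq : ∀ z : ↥(E ⊓ LinearMap.BilinForm.orthogonal Q E),
        Q (σ (T (Submodule.inclusion inf_le_left z))) (z : V) = 0 := by
      intro z
      have h := hT z.1 z.2.1 z.2.2
      have hi : Submodule.inclusion (inf_le_left : E ⊓ LinearMap.BilinForm.orthogonal Q E ≤ E) z
          = ⟨z.1, z.2.1⟩ := Subtype.ext rfl
      rw [hi]
      exact h
    rw [LinearMap.mem_ker]
    funext p
    obtain ⟨⟨i, j⟩, hij⟩ := p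
    have h1 := hq (e i)
    have h2 := hq (e j)
    have h3 := hq (e i + e j)
    simp only [map_add, Submodule.coe_add, LinearMap.add_apply] at h3
    simp only [psiMap_apply, Pi.zero_apply]
    linarith

theorem psiMap_surjective [FiniteDimensional ℝ V] (Q : LinearMap.BilinForm ℝ V)
    (hQnd : LinearMap.BilinForm.Nondegenerate Q) (E : Submodule ℝ V)
    (σ : V ⧸ E →ₗ[ℝ] V) (hσ : ∀ z, E.mkQ (σ z) = z) {r : ℕ}
    (e : Basis (Fin r) ℝ ↥(E ⊓ LinearMap.BilinForm.orthogonal Q E)) :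
    Function.Surjective (psiMap Q E σ e) := by
  intro f
  obtain ⟨C₀, hC₀⟩ := Submodule.exists_isCompl (E ⊓ LinearMap.BilinForm.orthogonal Q E)
  set Pz := (E ⊓ LinearMap.BilinForm.orthogonal Q E).linearProjOfIsCompl C₀ hC₀ with hPz
  set M : Fin r → Fin r → ℝ := fun i j =>
    if h : i ≤ j then f ⟨(i, j), h⟩ else f ⟨(j, i), le_of_not_ge h⟩ with hM
  have hMsymm : ∀ i j, M i j = M j i := by
    intro i j
    simp only [hM]
    rcases lt_trichotomy i j with h | rfl | h
    · rw [dif_pos h.le, dif_neg (not_le.mpr h)]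
    · rfl
    · rw [dif_neg (not_le.mpr h), dif_pos h.le]
  set g : ↥(E ⊓ LinearMap.BilinForm.orthogonal Q E) →ₗ[ℝ]
      ↥(E ⊓ LinearMap.BilinForm.orthogonal Q E) →ₗ[ℝ] ℝ :=
    ∑ i : Fin r, ∑ j : Fin r, M i j • LinearMap.smulRight (e.coord i) (e.coord j) with hgdef
  have hge : ∀ s t, g (e s) (e t) = M s t := by
    intro s t
    simp [hgdef, LinearMap.sum_apply, LinearMap.smul_apply, LinearMap.smulRight_apply,
      Basis.coord_apply, Basis.repr_self, Finsupp.single_apply, smul_eq_mul]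
  set H : ↥E →ₗ[ℝ] V →ₗ[ℝ] ℝ :=
    (1/2 : ℝ) • ((g.comp (Pz.comp E.subtype)).compl₂ Pz) with hH
  set Gm : ↥E →ₗ[ℝ] V := (LinearMap.BilinForm.toDual Q hQnd).symm.toLinearMap ∘ₗ H with hGm
  set T := E.mkQ ∘ₗ Gm with hTdef
  refine ⟨T, ?_⟩
  have hQG : ∀ (x : ↥E) (v : V), Q (Gm x) v = H x v := fun x v =>
    LinearMap.BilinForm.apply_toDual_symm_apply (hB := hQnd) (H x) v
  have hσG : ∀ (x : ↥E) (w : V), w ∈ LinearMap.BilinForm.orthogonal Q E →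
      Q (σ (T x)) w = H x w := by
    intro x w hw
    have hd : σ (T x) - Gm x ∈ E := by
      rw [← Submodule.Quotient.mk_eq_zero, ← Submodule.mkQ_apply, map_sub, hσ]
      show T x - E.mkQ (Gm x) = 0
      rw [hTdef]
      simp [LinearMap.comp_apply]
    have h0 : Q (σ (T x) - Gm x) w = 0 :=
      LinearMap.BilinForm.mem_orthogonal_iff.mp hw _ hd
    simp only [map_sub, LinearMap.sub_apply] at h0
    have := hQG x w
    linarith
  have hPe : ∀ z : ↥(E ⊓ LinearMap.BilinForm.orthogonal Q E), Pz (z : V) = z :=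
    fun z => Submodule.linearProjOfIsCompl_apply_left hC₀ z
  have hHval : ∀ (a b : ↥(E ⊓ LinearMap.BilinForm.orthogonal Q E)),
      H (Submodule.inclusion inf_le_left a) (b : V) = (1/2) * g a b := by
    intro a b
    simp only [hH, LinearMap.smul_apply, smul_eq_mul, LinearMap.compl₂_apply,
      LinearMap.comp_apply, Submodule.subtype_apply]
    have h1 : ((Submodule.inclusion
        (inf_le_left : E ⊓ LinearMap.BilinForm.orthogonal Q E ≤ E) a : ↥E) : V) = (a : V) := rfl
    rw [h1, hPe a, hPe b]
  funext p
  obtain ⟨⟨i, j⟩, hij⟩ := p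
  simp only [psiMap_apply]
  rw [hσG _ _ (e j).2.2, hσG _ _ (e i).2.2, hHval, hHval, hge, hge, hMsymm j i]
  rw [show M i j = f ⟨(i, j), hij⟩ from dif_pos hij]
  ring

theorem image_le_Sset' (Q : LinearMap.BilinForm ℝ V) (hQsymm : ∀ u v : V, Q u v = Q v u)
    (E : Submodule ℝ V) {A : V →ₗ[ℝ] V} (hA : A ∈ soQ Q)
    (x : V) (hx : x ∈ E) (hxO : x ∈ LinearMap.BilinForm.orthogonal Q E)
    (y : V) (hy : E.mkQ y = piE E A ⟨x, hx⟩) : Q y x = 0 := by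
  rw [piE_apply] at hy
  have hd : y - A x ∈ E := by
    rw [← Submodule.Quotient.mk_eq_zero, ← Submodule.mkQ_apply, map_sub, hy, sub_self]
  have h1 : Q (y - A x) x = 0 := LinearMap.BilinForm.mem_orthogonal_iff.mp hxO _ hd
  have h2 := mem_soQ.mp hA x x
  have h3 := hQsymm x (A x)
  simp only [map_sub, LinearMap.sub_apply] at h1
  linarith


end Aux

/-- The image of `π_E : so(Q) → Hom(E, V/E)` equals the set of maps `T` with
`Q(Tx,x) = 0` for all `x ∈ E₀ = E ∩ E^Q`, and has dimension `k(n−k) − r(r+1)/2`. -/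
theorem stmt_9 {V : Type*} [AddCommGroup V] [Module ℝ V] [FiniteDimensional ℝ V]
    (Q : LinearMap.BilinForm ℝ V)
    (hQsymm : ∀ u v : V, Q u v = Q v u)
    (hQnd : LinearMap.BilinForm.Nondegenerate Q)
    (n k r : ℕ) (hn : finrank ℝ V = n)
    (E : Submodule ℝ V) (hk : finrank ℝ E = k)
    (hr : finrank ℝ ↥(E ⊓ LinearMap.BilinForm.orthogonal Q E) = r) :
    ((Submodule.map (piE E) (soQ Q) : Submodule ℝ (↥E →ₗ[ℝ] V ⧸ E)) : Set (↥E →ₗ[ℝ] V ⧸ E)) =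
      {T | ∀ (x : V) (hx : x ∈ E), x ∈ LinearMap.BilinForm.orthogonal Q E →
        ∀ y : V, E.mkQ y = T ⟨x, hx⟩ → Q y x = 0} ∧
    finrank ℝ ↥(Submodule.map (piE E) (soQ Q)) = k * (n - k) - r * (r + 1) / 2 := by
  obtain ⟨σ, hσ0⟩ := E.mkQ.exists_rightInverse_of_surjective E.range_mkQ
  have hσ : ∀ z, E.mkQ (σ z) = z := by
    intro z
    have := LinearMap.congr_fun hσ0 z
    simpa using this
  have hmap : Submodule.map (piE E) (soQ Q) = Sset Q E := by
    apply le_antisymm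
    · rintro T ⟨A, hA, rfl⟩
      exact fun x hx hxO y hy => image_le_Sset' Q hQsymm E hA x hx hxO y hy
    · intro T hT
      obtain ⟨P, Pq, h1, h2, h3, h4⟩ := proj_data Q E
      have hT' := (mem_Sset_iff σ hσ).mp hT
      obtain ⟨A, hA, hAT⟩ := extension_aux Q hQsymm hQnd E σ hσ T hT' P Pq h1 h2 h3 h4
      exact ⟨A, hA, hAT⟩
  constructor
  · rw [hmap]
    rfl
  · have e : Basis (Fin r) ℝ ↥(E ⊓ LinearMap.BilinForm.orthogonal Q E) :=
      (Module.finBasis ℝ _).reindex (finCongr hr)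
    have h1 := LinearMap.finrank_range_add_finrank_ker (psiMap Q E σ e)
    have h2 : LinearMap.range (psiMap Q E σ e) = ⊤ :=
      LinearMap.range_eq_top.mpr (psiMap_surjective Q hQnd E σ hσ e)
    rw [h2, ker_psiMap Q E σ hσ e, finrank_top] at h1
    have h3 : finrank ℝ ({p : Fin r × Fin r // p.1 ≤ p.2} → ℝ) = r * (r + 1) / 2 := by
      rw [Module.finrank_pi, card_pairs]
    have h4 : finrank ℝ (↥E →ₗ[ℝ] V ⧸ E) = k * (n - k) := by
      rw [Module.finrank_linearMap, hk]
      have h5 := Submodule.finrank_quotient_add_finrank E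
      have h6 : finrank ℝ (V ⧸ E) = n - k := by omega
      rw [h6, Nat.mul_comm]
    rw [h3, h4] at h1
    rw [hmap]
    omega
end
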